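/- For every T ∈ (0,1) and all a, b ∈ (0, T]: |ln(1 − a) − ln(1 − b)| ≤ (T/(1 − T))·|ln a − ln b|. -/

import Mathlib

private lemma log_one_sub_holder_aux
    (T : ℝ) (hT : T ∈ Set.Ioo (0 : ℝ) 1) (a b : ℝ)
    (ha : a ∈ Set.Ioc (0 : ℝ) T) (hb : b ∈ Set.Ioc (0 : ℝ) T) (hab : a ≤ b) :
    Real.log (1 - a) - Real.log (1 - b) ≤ (T / (1 - T)) * (Real.log b - Real.log a) := by
  obtain ⟨hT0, hT1⟩ := hT
  obtain ⟨ha0, haT⟩ := ha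
  obtain ⟨hb0, hbT⟩ := hb
  have h1b : 0 < 1 - b := by linarith
  have h1a : 0 < 1 - a := by linarith
  have h1T : 0 < 1 - T := by linarith
  -- Upper bound: log(1-a) - log(1-b) ≤ (b-a)/(1-b)
  have hub : Real.log (1 - a) - Real.log (1 - b) ≤ (b - a) / (1 - b) := by
    have h := Real.log_le_sub_one_of_pos (x := (1 - a) / (1 - b)) (by positivity)
    rw [Real.log_div (by linarith) (by linarith)] at h
    have he : (1 - a) / (1 - b) - 1 = (b - a) / (1 - b) := by field_simp; ring
    linarith
  -- Lower bound: (b-a)/b ≤ log b - log a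
  have hlb : (b - a) / b ≤ Real.log b - Real.log a := by
    have h := Real.log_le_sub_one_of_pos (x := a / b) (by positivity)
    rw [Real.log_div (ne_of_gt ha0) (ne_of_gt hb0)] at h
    have he : a / b - 1 = -((b - a) / b) := by field_simp; ring
    linarith [h, he ▸ h]
  -- Chain
  have hstep1 : (b - a) / (1 - b) ≤ (b - a) / (1 - T) :=
    div_le_div_of_nonneg_left (by linarith) h1T (by linarith)
  have hstep2 : (b - a) / (1 - T) ≤ (T / (1 - T)) * ((b - a) / b) := by
    rw [div_mul_div_comm]
    rw [div_le_div_iff₀ h1T (by positivity)]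
    have : T * (b - a) * (1 - T) - (b - a) * ((1 - T) * b) = (b - a) * (1 - T) * (T - b) := by ring
    nlinarith [mul_nonneg (mul_nonneg (by linarith : (0:ℝ) ≤ b - a) (le_of_lt h1T)) (by linarith : (0:ℝ) ≤ T - b)]
  have hstep3 : (T / (1 - T)) * ((b - a) / b) ≤ (T / (1 - T)) * (Real.log b - Real.log a) :=
    mul_le_mul_of_nonneg_left hlb (by positivity)
  linarith

/-- The estimate from the proof of Lemma 5.8 of the paper: for `a, b ∈ (0, T]` with
`T < 1`, `|ln(1-a) - ln(1-b)| ≤ (T/(1-T))·|ln a - ln b|`. -/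
theorem log_one_sub_holder_transfer
    (T : ℝ) (hT : T ∈ Set.Ioo (0 : ℝ) 1) (a b : ℝ)
    (ha : a ∈ Set.Ioc (0 : ℝ) T) (hb : b ∈ Set.Ioc (0 : ℝ) T) :
    |Real.log (1 - a) - Real.log (1 - b)| ≤ (T / (1 - T)) * |Real.log a - Real.log b| := by
  rcases le_total a b with hab | hab
  · have key := log_one_sub_holder_aux T hT a b ha hb hab
    have hlog : Real.log a ≤ Real.log b := Real.log_le_log ha.1 hab
    have hlog' : Real.log (1 - b) ≤ Real.log (1 - a) :=
      Real.log_le_log (by linarith [hb.2, hT.2]) (by linarith)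
    rw [abs_of_nonneg (by linarith), abs_of_nonpos (by linarith), ← neg_sub (Real.log b)]
    linarith
  · have key := log_one_sub_holder_aux T hT b a hb ha hab
    have hlog : Real.log b ≤ Real.log a := Real.log_le_log hb.1 hab
    have hlog' : Real.log (1 - a) ≤ Real.log (1 - b) :=
      Real.log_le_log (by linarith [ha.2, hT.2]) (by linarith)
    rw [abs_of_nonpos (by linarith), abs_of_nonneg (by linarith)]
    linarith
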